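/- For any x > 0, log(1+x) - 5/3 + 3/(x+1) - 2/(x+1)² + 2/(3(x+1)³) > 0. -/

import Mathlib

open Real

lemma aux_log_bound {t : ℝ} (ht : 1 ≤ t) : 2 * (t - 1) / (t + 1) ≤ Real.log t := by
  have key : MonotoneOn (fun t : ℝ => Real.log t - 2 * (t - 1) / (t + 1)) (Set.Ici 1) := by
    apply monotoneOn_of_deriv_nonneg (convex_Ici 1)
    · apply ContinuousOn.sub
      · exact Real.continuousOn_log.mono (fun y hy => by
          simp only [Set.mem_Ici] at hy; simp only [Set.mem_compl_iff, Set.mem_singleton_iff]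
          linarith)
      · exact ContinuousOn.div (by fun_prop) (by fun_prop)
          (fun y hy => by simp only [Set.mem_Ici] at hy; intro h; linarith)
    · intro y hy
      rw [interior_Ici] at hy
      simp only [Set.mem_Ioi] at hy
      have hy0 : y ≠ 0 := by linarith
      have hy1 : y + 1 ≠ 0 := by linarith
      exact DifferentiableAt.differentiableWithinAt
        ((Real.differentiableAt_log hy0).sub (DifferentiableAt.div (by fun_prop) (by fun_prop) hy1))
    · intro y hy
      rw [interior_Ici] at hy
      simp only [Set.mem_Ioi] at hy
      have hy0 : y ≠ 0 := by linarith
      have hy1 : y + 1 ≠ 0 := by linarith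
      have h1 : HasDerivAt (fun t : ℝ => Real.log t - 2 * (t - 1) / (t + 1))
          (y⁻¹ - (2 * 1 * (y + 1) - 2 * (y - 1) * 1) / (y + 1) ^ 2) y := by
        exact (Real.hasDerivAt_log hy0).sub
          (((hasDerivAt_id y).sub_const 1 |>.const_mul 2).div
            ((hasDerivAt_id y).add_const 1) hy1)
      rw [h1.deriv, inv_eq_one_div, div_sub_div _ _ hy0 (pow_ne_zero 2 hy1)]
      apply div_nonneg
      · nlinarith
      · positivity
  have h := key (Set.mem_Ici.mpr le_rfl) (Set.mem_Ici.mpr ht) ht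
  simp at h
  linarith

theorem stmt_16 (x : ℝ) (hx : 0 < x) :
    0 < Real.log (1 + x) - 5 / 3 + 3 / (x + 1) - 2 / (x + 1) ^ 2
        + 2 / (3 * (x + 1) ^ 3) := by
  have ht : (1:ℝ) ≤ x + 1 := by linarith
  have hlog := aux_log_bound ht
  have h1 : (1:ℝ) + x = x + 1 := by ring
  rw [h1]
  set t := x + 1 with htdef
  have ht1 : 1 < t := by simp [htdef]; linarith
  have ht0 : (0:ℝ) < t := by linarith
  have key : 0 < 2 * (t - 1) / (t + 1) - 5 / 3 + 3 / t - 2 / t ^ 2 + 2 / (3 * t ^ 3) := by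
    rw [show 2 * (t - 1) / (t + 1) - 5 / 3 + 3 / t - 2 / t ^ 2 + 2 / (3 * t ^ 3)
        = ((t - 1) ^ 2 * (t ^ 2 + 2)) / (3 * t ^ 3 * (t + 1)) by
      field_simp; ring]
    apply div_pos
    · nlinarith
    · positivity
  linarith
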